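/- In F = Q(√7,√13), the element 3 + √7 has norm 4 to Q and generates an ideal 𝔓 of O_F with 𝔓² = 2O_F. -/
import Mathlib

lemma sqrt7_integral : IsIntegral ℤ (Real.sqrt 7) := by
  refine ⟨Polynomial.X ^ 2 - Polynomial.C 7, ?_, ?_⟩
  · apply Polynomial.monic_X_pow_sub_C <;> norm_num
  · simp [Polynomial.eval₂, Real.sq_sqrt (by norm_num : (7:ℝ) ≥ 0)]


/-- In F = ℚ(√7,√13), the element 3 + √7 has norm 4 to ℚ (the product of its
four conjugates 3±√7, each occurring twice, is 4), and generates an ideal 𝔓 of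
O_F with 𝔓² = 2·O_F: concretely, (3+√7)² = 2·u for a unit u of O_F. -/
theorem three_add_sqrt7_norm_and_ideal_square :
    let s7 : ℝ := Real.sqrt 7
    let F : IntermediateField ℚ ℝ :=
      IntermediateField.adjoin ℚ ({Real.sqrt 7, Real.sqrt 13} : Set ℝ)
    ((3 + s7) * (3 + s7) * (3 - s7) * (3 - s7) = 4) ∧
      ∃ u : ℝ, u ∈ F ∧ IsIntegral ℤ u ∧
        (∃ v : ℝ, v ∈ F ∧ IsIntegral ℤ v ∧ u * v = 1) ∧
        (3 + s7) ^ 2 = 2 * u := by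
  intro s7 F
  have h7 : s7 ^ 2 = 7 := Real.sq_sqrt (by norm_num)
  have hmem : s7 ∈ F := IntermediateField.subset_adjoin ℚ _ (Or.inl rfl)
  have hint : IsIntegral ℤ s7 := sqrt7_integral
  have h3 : IsIntegral ℤ ((3:ℝ)) := isIntegral_algebraMap (x := (3:ℤ))
  have h8 : IsIntegral ℤ ((8:ℝ)) := isIntegral_algebraMap (x := (8:ℤ))
  refine ⟨by nlinarith, 8 + 3 * s7, ?_, h8.add (h3.mul hint), ⟨8 - 3 * s7, ?_, h8.sub (h3.mul hint), by nlinarith⟩, by nlinarith⟩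
  · exact add_mem (by exact_mod_cast F.natCast_mem _) (mul_mem (by exact_mod_cast F.natCast_mem 3) hmem)
  · exact sub_mem (by exact_mod_cast F.natCast_mem _) (mul_mem (by exact_mod_cast F.natCast_mem 3) hmem)
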